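/- arXiv:2011.11418 — 2 statements merged into one kernel-verified Lean document; each statement's English description precedes it below -/
import Mathlib

section
/- Let V be a finite set, 𝔪 : V × V → [0,∞) a symmetric function, and 𝔪 : V → (0,∞) with 𝔪(x) = Σ_y 𝔪(x,y). Define Γ(f,g)(x) = (1/2) Σ_y (f(y)-f(x))(g(y)-g(x)) 𝔪(x,y)/𝔪(x). Then for all f : V → ℝ and λ ≥ 0, Σ_x Γ(f, e^{λf})(x) 𝔪(x) ≤ λ Σ_x e^{λ f(x)} Γ(f,f)(x) 𝔪(x). -/
open Finset

/-- Carré du champ operator on a finite weighted graph: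
`Γ(f,g)(x) = (1/2) Σ_y (f(y)-f(x))(g(y)-g(x)) 𝔪_{xy}/𝔪(x)` with `𝔪(x) = Σ_y 𝔪_{xy}`. -/
noncomputable def gam {V : Type*} [Fintype V] (w : V → V → ℝ) (f g : V → ℝ) (x : V) : ℝ :=
  (1 / 2) * ∑ y, (f y - f x) * (g y - g x) * (w x y / ∑ z, w x z)

lemma sinh_le_mul_cosh (u : ℝ) (hu : 0 ≤ u) : Real.sinh u ≤ u * Real.cosh u := by
  have key : ∀ x : ℝ, HasDerivAt (fun t => t * Real.cosh t - Real.sinh t)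
      (x * Real.sinh x) x := by
    intro x
    have h1 : HasDerivAt (fun t : ℝ => t * Real.cosh t)
        (1 * Real.cosh x + x * Real.sinh x) x :=
      (hasDerivAt_id x).mul (Real.hasDerivAt_cosh x)
    have h2 := Real.hasDerivAt_sinh x
    have := h1.sub h2
    exact this.congr_deriv (by ring)
  have mono : MonotoneOn (fun t => t * Real.cosh t - Real.sinh t) (Set.Ici 0) := by
    apply monotoneOn_of_deriv_nonneg (convex_Ici 0)
    · exact ((continuous_id.mul Real.continuous_cosh).sub Real.continuous_sinh).continuousOn
    · intro x hx
      exact ((key x).differentiableAt).differentiableWithinAt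
    · intro x hx
      rw [(key x).deriv]
      have hx0 : 0 < x := by simpa using hx
      have : 0 ≤ Real.sinh x := Real.sinh_nonneg_iff.2 hx0.le
      positivity
  have h0 := mono (Set.self_mem_Ici) (Set.mem_Ici.2 hu) hu
  simp only [Real.cosh_zero, Real.sinh_zero, zero_mul, sub_zero, mul_zero, sub_self] at h0
  linarith

lemma mul_sinh_le (u : ℝ) : u * Real.sinh u ≤ u ^ 2 * Real.cosh u := by
  rcases le_or_gt 0 u with h | h
  · have := sinh_le_mul_cosh u h
    nlinarith
  · have := sinh_le_mul_cosh (-u) (by linarith)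
    rw [Real.sinh_neg, Real.cosh_neg] at this
    nlinarith

lemma exp_key (a b : ℝ) :
    (a - b) * (Real.exp a - Real.exp b) ≤ (a - b) ^ 2 / 2 * (Real.exp a + Real.exp b) := by
  set m := (a + b) / 2 with hm
  set u := (a - b) / 2 with hu
  have ha : a = m + u := by rw [hm, hu]; ring
  have hb : b = m - u := by rw [hm, hu]; ring
  have h1 : Real.exp a - Real.exp b = Real.exp m * (2 * Real.sinh u) := by
    rw [ha, hb, Real.exp_add, sub_eq_add_neg m u, Real.exp_add, Real.sinh_eq]; ring
  have h2 : Real.exp a + Real.exp b = Real.exp m * (2 * Real.cosh u) := by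
    rw [ha, hb, Real.exp_add, sub_eq_add_neg m u, Real.exp_add, Real.cosh_eq]; ring
  have h3 : a - b = 2 * u := by rw [ha, hb]; ring
  have h4 := mul_sinh_le u
  have h5 := (Real.exp_pos m).le
  rw [h1, h2, h3]
  nlinarith [mul_le_mul_of_nonneg_left h4 h5]

lemma exp_key' (l : ℝ) (hl : 0 ≤ l) (a b : ℝ) :
    (a - b) * (Real.exp (l * a) - Real.exp (l * b)) ≤
      l / 2 * ((a - b) ^ 2 * (Real.exp (l * a) + Real.exp (l * b))) := by
  rcases eq_or_lt_of_le hl with h | h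
  · simp [← h]
  · have hk := exp_key (l * a) (l * b)
    have h2 : l * a - l * b = l * (a - b) := by ring
    rw [h2] at hk
    have hE : 0 < Real.exp (l * a) + Real.exp (l * b) := by positivity
    nlinarith [sq_nonneg (a - b), mul_pos h h]

theorem gamma_exp_estimate {V : Type*} [Fintype V] (w : V → V → ℝ)
    (hsym : ∀ x y, w x y = w y x) (hnn : ∀ x y, 0 ≤ w x y)
    (hpos : ∀ x, 0 < ∑ y, w x y) (f : V → ℝ) (l : ℝ) (hl : 0 ≤ l) :
    ∑ x, gam w f (fun z => Real.exp (l * f z)) x * (∑ y, w x y) ≤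
      l * ∑ x, Real.exp (l * f x) * gam w f f x * (∑ y, w x y) := by
  set E : V → ℝ := fun z => Real.exp (l * f z) with hE
  have hL : ∀ (g : V → ℝ) (x : V), gam w f g x * (∑ y, w x y)
      = (1 / 2) * ∑ y, (f y - f x) * (g y - g x) * w x y := by
    intro g x
    have key : (∑ y, (f y - f x) * (g y - g x) * (w x y / ∑ z, w x z)) * (∑ z, w x z)
        = ∑ y, (f y - f x) * (g y - g x) * w x y := by
      rw [Finset.sum_mul]
      refine Finset.sum_congr rfl fun y _ => ?_
      rw [mul_assoc, div_mul_cancel₀ _ (hpos x).ne']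
    rw [gam, mul_assoc, key]
  have lhs_eq : ∑ x, gam w f E x * (∑ y, w x y)
      = (1 / 2) * ∑ x, ∑ y, (f y - f x) * (E y - E x) * w x y := by
    rw [Finset.mul_sum]
    exact Finset.sum_congr rfl fun x _ => hL E x
  have rhs_eq : ∑ x, E x * gam w f f x * (∑ y, w x y)
      = (1 / 2) * ∑ x, ∑ y, E x * ((f y - f x) * (f y - f x) * w x y) := by
    rw [Finset.mul_sum]
    refine Finset.sum_congr rfl fun x _ => ?_
    rw [mul_assoc, hL f x, mul_left_comm, Finset.mul_sum]
  have hswap : ∑ x, ∑ y, E x * ((f y - f x) * (f y - f x) * w x y)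
      = ∑ x, ∑ y, E y * ((f y - f x) * (f y - f x) * w x y) := by
    rw [Finset.sum_comm]
    refine Finset.sum_congr rfl fun x _ => Finset.sum_congr rfl fun y _ => ?_
    rw [hsym y x]; ring
  have main : ∑ x, ∑ y, (f y - f x) * (E y - E x) * w x y
      ≤ ∑ x, ∑ y, l / 2 * ((f y - f x) ^ 2 * (E y + E x)) * w x y := by
    refine Finset.sum_le_sum fun x _ => Finset.sum_le_sum fun y _ => ?_
    exact mul_le_mul_of_nonneg_right (exp_key' l hl (f y) (f x)) (hnn x y)
  have expand : ∑ x, ∑ y, l / 2 * ((f y - f x) ^ 2 * (E y + E x)) * w x y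
      = l * ∑ x, ∑ y, E x * ((f y - f x) * (f y - f x) * w x y) := by
    have : ∑ x, ∑ y, l / 2 * ((f y - f x) ^ 2 * (E y + E x)) * w x y
        = l / 2 * (∑ x, ∑ y, E y * ((f y - f x) * (f y - f x) * w x y)
          + ∑ x, ∑ y, E x * ((f y - f x) * (f y - f x) * w x y)) := by
      rw [← Finset.sum_add_distrib, Finset.mul_sum]
      refine Finset.sum_congr rfl fun x _ => ?_
      rw [← Finset.sum_add_distrib, Finset.mul_sum]
      refine Finset.sum_congr rfl fun y _ => ?_
      ring
    rw [this, ← hswap]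
    ring
  rw [lhs_eq, rhs_eq]
  calc (1 / 2) * ∑ x, ∑ y, (f y - f x) * (E y - E x) * w x y
      ≤ (1 / 2) * ∑ x, ∑ y, l / 2 * ((f y - f x) ^ 2 * (E y + E x)) * w x y := by
        linarith [main]
    _ = l * ((1 / 2) * ∑ x, ∑ y, E x * ((f y - f x) * (f y - f x) * w x y)) := by
        rw [expand]; ring
end

section
/- Let V be a finite set with a (possibly non-symmetric) distance function d and full-support probability measure 𝔪. Let c > 0. Then the following are equivalent: (1) for every probability density ρ with respect to 𝔪, W(𝔪, ρ𝔪)² ≤ (2/c) ℰ(ρ), where ℰ(ρ) = Σ_x ρ(x) log ρ(x) 𝔪(x) and W is the Wasserstein distance for cost d; (2) for every 1-Lipschitz f with 𝔪(f) = 0 and every λ ≥ 0, 𝔪(e^{λf}) ≤ e^{λ²/(2c)}. -/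
open Finset

/-- `π` is a coupling of the probability measures `ν₀` and `ν₁` on a finite set. -/
def IsCoupling {V : Type*} [Fintype V] (π : V → V → ℝ) (ν₀ ν₁ : V → ℝ) : Prop :=
  (∀ x y, 0 ≤ π x y) ∧ (∀ x, ∑ y, π x y = ν₀ x) ∧ (∀ y, ∑ x, π x y = ν₁ y)

/-- Wasserstein distance for the (possibly non-symmetric) cost `d`. -/
noncomputable def wass {V : Type*} [Fintype V] (d : V → V → ℝ) (ν₀ ν₁ : V → ℝ) : ℝ :=
  sInf {r : ℝ | ∃ π : V → V → ℝ, IsCoupling π ν₀ ν₁ ∧ r = ∑ x, ∑ y, d x y * π x y}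

section Helpers

variable {V : Type*} [Fintype V]

lemma prod_coupling (ν₀ ν₁ : V → ℝ)
    (hm0 : ∑ x, ν₀ x = 1) (hm1 : ∑ x, ν₁ x = 1) (h0 : ∀ x, 0 ≤ ν₀ x) (h1 : ∀ x, 0 ≤ ν₁ x) :
    IsCoupling (fun x y => ν₀ x * ν₁ y) ν₀ ν₁ :=
  ⟨fun x y => mul_nonneg (h0 x) (h1 y),
   fun x => by rw [← Finset.mul_sum, hm1, mul_one],
   fun y => by rw [← Finset.sum_mul, hm0, one_mul]⟩

lemma weak_dual (d : V → V → ℝ) (ν₀ ν₁ : V → ℝ) (f : V → ℝ)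
    (hf : ∀ x y, f y - f x ≤ d x y) (hne : ∃ π, IsCoupling π ν₀ ν₁) :
    (∑ y, f y * ν₁ y) - (∑ x, f x * ν₀ x) ≤ wass d ν₀ ν₁ := by
  obtain ⟨π₀, hπ₀⟩ := hne
  have hmem : (∑ x, ∑ y, d x y * π₀ x y)
      ∈ {r : ℝ | ∃ π, IsCoupling π ν₀ ν₁ ∧ r = ∑ x, ∑ y, d x y * π x y} := ⟨π₀, hπ₀, rfl⟩
  apply le_csInf ⟨_, hmem⟩
  rintro r ⟨π, ⟨hpos, hrow, hcol⟩, rfl⟩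
  have h1 : ∑ y, f y * ν₁ y = ∑ x, ∑ y, f y * π x y := by
    rw [Finset.sum_comm]
    exact Finset.sum_congr rfl fun y _ => by rw [← hcol y, Finset.mul_sum]
  have h2 : ∑ x, f x * ν₀ x = ∑ x, ∑ y, f x * π x y := by
    exact Finset.sum_congr rfl fun x _ => by rw [← hrow x, Finset.mul_sum]
  rw [h1, h2, ← Finset.sum_sub_distrib]
  apply Finset.sum_le_sum
  intro x _
  rw [← Finset.sum_sub_distrib]
  apply Finset.sum_le_sum
  intro y _
  rw [← sub_mul]
  exact mul_le_mul_of_nonneg_right (hf x y) (hpos x y)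

lemma ent_nonneg (m ρ : V → ℝ) (hmpos : ∀ x, 0 < m x) (hprob : ∑ x, m x = 1)
    (hρ : ∀ x, 0 ≤ ρ x) (hρm : ∑ x, ρ x * m x = 1) :
    0 ≤ ∑ x, ρ x * Real.log (ρ x) * m x := by
  have key : ∀ x, (ρ x - 1) * m x ≤ ρ x * Real.log (ρ x) * m x := by
    intro x
    apply mul_le_mul_of_nonneg_right _ (hmpos x).le
    rcases eq_or_lt_of_le (hρ x) with h | h
    · simp [← h]
    · have := Real.log_le_sub_one_of_pos (show (0:ℝ) < 1 / ρ x by positivity)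
      rw [Real.log_div one_ne_zero (ne_of_gt h)] at this
      simp only [Real.log_one, zero_sub] at this
      have h2 : ρ x * (1 / ρ x - 1) = 1 - ρ x := by field_simp
      nlinarith [mul_le_mul_of_nonneg_left this h.le, h2]
  calc (0:ℝ) = ∑ x, (ρ x - 1) * m x := by
        simp [sub_mul, Finset.sum_sub_distrib, hρm, hprob]
    _ ≤ _ := Finset.sum_le_sum fun x _ => key x

/-- Gibbs variational inequality. -/
lemma gibbs (m ρ g : V → ℝ) (hmpos : ∀ x, 0 < m x) (hprob : ∑ x, m x = 1)
    (hρ : ∀ x, 0 ≤ ρ x) (hρm : ∑ x, ρ x * m x = 1) :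
    ∑ x, g x * (ρ x * m x) ≤
      (∑ x, ρ x * Real.log (ρ x) * m x) + Real.log (∑ x, Real.exp (g x) * m x) := by
  classical
  have : Nonempty V := by
    rcases isEmpty_or_nonempty V with h | h
    · rw [Finset.univ_eq_empty, Finset.sum_empty] at hρm; norm_num at hρm
    · exact h
  set Z := ∑ x, Real.exp (g x) * m x with hZ
  have hZpos : 0 < Z := Finset.sum_pos (fun x _ => mul_pos (Real.exp_pos _) (hmpos x)) univ_nonempty
  have key : ∀ x, g x * (ρ x * m x) - ρ x * Real.log (ρ x) * m x - Real.log Z * (ρ x * m x)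
      ≤ Real.exp (g x) * m x / Z - ρ x * m x := by
    intro x
    rcases eq_or_lt_of_le (hρ x) with h | h
    · rw [← h]
      have : 0 ≤ Real.exp (g x) * m x / Z :=
        le_of_lt (div_pos (mul_pos (Real.exp_pos _) (hmpos x)) hZpos)
      simpa using this
    · have hlog := Real.log_le_sub_one_of_pos
        (div_pos (Real.exp_pos (g x)) (mul_pos hZpos h))
      rw [Real.log_div (Real.exp_ne_zero _) (by positivity), Real.log_exp,
        Real.log_mul (ne_of_gt hZpos) (ne_of_gt h)] at hlog
      have hm := (hmpos x)
      have h2 : (g x - (Real.log Z + Real.log (ρ x))) * (ρ x * m x)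
          ≤ (Real.exp (g x) / (Z * ρ x) - 1) * (ρ x * m x) :=
        mul_le_mul_of_nonneg_right (by linarith) (by positivity)
      have h3 : (Real.exp (g x) / (Z * ρ x) - 1) * (ρ x * m x)
          = Real.exp (g x) * m x / Z - ρ x * m x := by
        field_simp
      nlinarith [h2, h3]
  have hsum := Finset.sum_le_sum (s := univ)
    (f := fun x => g x * (ρ x * m x) - ρ x * Real.log (ρ x) * m x - Real.log Z * (ρ x * m x))
    (g := fun x => Real.exp (g x) * m x / Z - ρ x * m x) (fun x _ => key x)
  have hL : ∑ x, (g x * (ρ x * m x) - ρ x * Real.log (ρ x) * m x - Real.log Z * (ρ x * m x))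
      = (∑ x, g x * (ρ x * m x)) - (∑ x, ρ x * Real.log (ρ x) * m x) - Real.log Z := by
    rw [Finset.sum_sub_distrib, Finset.sum_sub_distrib, ← Finset.mul_sum, hρm, mul_one]
  have hR : ∑ x, (Real.exp (g x) * m x / Z - ρ x * m x) = 0 := by
    rw [Finset.sum_sub_distrib, ← Finset.sum_div, ← hZ, div_self (ne_of_gt hZpos), hρm, sub_self]
  rw [hL, hR] at hsum
  linarith

end Helpers
section KR
open Filter Topology

variable {V : Type*} [Fintype V]

set_option maxHeartbeats 1000000 in
lemma kr_dual [Nonempty V] (d : V → V → ℝ) (hdnn : ∀ x y, 0 ≤ d x y)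
    (hdzero : ∀ x, d x x = 0) (htri : ∀ x y z, d x z ≤ d x y + d y z)
    (ν₀ ν₁ : V → ℝ) (h0 : ∀ x, 0 ≤ ν₀ x) (h1 : ∀ x, 0 ≤ ν₁ x)
    (hm0 : ∑ x, ν₀ x = 1) (hm1 : ∑ x, ν₁ x = 1)
    {t : ℝ} (ht : t < wass d ν₀ ν₁) :
    ∃ h : V → ℝ, (∀ x y, h y - h x ≤ d x y) ∧
      t < (∑ y, h y * ν₁ y) - (∑ x, h x * ν₀ x) := by
  classical
  set K : Set ((V → ℝ) × (V → ℝ) × ℝ) :=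
    {p | ∃ π : V → V → ℝ, (∀ x y, 0 ≤ π x y) ∧ (∀ x, ∑ y, π x y = p.1 x) ∧
      (∀ y, ∑ x, π x y = p.2.1 y) ∧ ∑ x, ∑ y, d x y * π x y ≤ p.2.2} with hKdef
  -- convexity
  have hKconv : Convex ℝ K := by
    rintro p ⟨π, hπ0, hπr, hπc, hπcost⟩ q ⟨σ, hσ0, hσr, hσc, hσcost⟩ a b ha hb hab
    refine ⟨fun x y => a * π x y + b * σ x y, ?_, ?_, ?_, ?_⟩
    · exact fun x y => add_nonneg (mul_nonneg ha (hπ0 x y)) (mul_nonneg hb (hσ0 x y))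
    · intro x
      simp only [Finset.sum_add_distrib, ← Finset.mul_sum, hπr, hσr,
        Prod.fst_add, Prod.smul_fst, Pi.add_apply, Pi.smul_apply, smul_eq_mul]
    · intro y
      simp only [Finset.sum_add_distrib, ← Finset.mul_sum, hπc, hσc,
        Prod.snd_add, Prod.smul_snd, Prod.fst_add, Prod.smul_fst,
        Pi.add_apply, Pi.smul_apply, smul_eq_mul]
    · have : ∑ x, ∑ y, d x y * (a * π x y + b * σ x y)
          = a * (∑ x, ∑ y, d x y * π x y) + b * (∑ x, ∑ y, d x y * σ x y) := by
        simp only [Finset.mul_sum, ← Finset.sum_add_distrib]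
        refine Finset.sum_congr rfl fun x _ => Finset.sum_congr rfl fun y _ => by ring
      rw [this]
      have h2 : (a • p + b • q).2.2 = a * p.2.2 + b * q.2.2 := rfl
      rw [h2]
      exact add_le_add (mul_le_mul_of_nonneg_left hπcost ha)
        (mul_le_mul_of_nonneg_left hσcost hb)
  -- scaling
  have hKsmul : ∀ (a : ℝ), 0 ≤ a → ∀ p ∈ K, a • p ∈ K := by
    rintro a ha p ⟨π, hπ0, hπr, hπc, hπcost⟩
    refine ⟨fun x y => a * π x y, fun x y => mul_nonneg ha (hπ0 x y), ?_, ?_, ?_⟩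
    · intro x
      simp only [← Finset.mul_sum, hπr, Prod.smul_fst, Pi.smul_apply, smul_eq_mul]
    · intro y
      simp only [← Finset.mul_sum, hπc, Prod.smul_snd, Prod.smul_fst,
        Pi.smul_apply, smul_eq_mul]
    · have : ∑ x, ∑ y, d x y * (a * π x y) = a * ∑ x, ∑ y, d x y * π x y := by
        simp only [Finset.mul_sum]
        refine Finset.sum_congr rfl fun x _ => Finset.sum_congr rfl fun y _ => by ring
      rw [this]
      exact mul_le_mul_of_nonneg_left hπcost ha
  -- closedness
  have hKclosed : IsClosed K := by
    apply IsSeqClosed.isClosed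
    intro xseq p hxK hxlim
    choose Pn hPn0 hPnr hPnc hPncost using hxK
    have hmass : Tendsto (fun n => ∑ x, (xseq n).1 x) atTop (𝓝 (∑ x, p.1 x)) :=
      ((continuous_finset_sum Finset.univ fun x _ =>
        (continuous_apply x).comp continuous_fst).tendsto p).comp hxlim
    obtain ⟨B, hB⟩ := hmass.bddAbove_range
    have hBn : ∀ n, ∑ x, (xseq n).1 x ≤ B := fun n => hB ⟨n, rfl⟩
    have hnn1 : ∀ n x, 0 ≤ (xseq n).1 x := by
      intro n x
      rw [← hPnr n x]
      exact Finset.sum_nonneg fun y _ => hPn0 n x y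
    have hentry : ∀ n a b, Pn n a b ∈ Set.Icc (0:ℝ) B := by
      intro n a b
      refine ⟨hPn0 n a b, ?_⟩
      calc Pn n a b ≤ ∑ y, Pn n a y :=
            Finset.single_le_sum (fun y _ => hPn0 n a y) (Finset.mem_univ b)
        _ = (xseq n).1 a := hPnr n a
        _ ≤ ∑ x, (xseq n).1 x :=
            Finset.single_le_sum (fun x _ => hnn1 n x) (Finset.mem_univ a)
        _ ≤ B := hBn n
    have hScpt : IsCompact (Set.univ.pi fun _ : V => Set.univ.pi fun _ : V => Set.Icc (0:ℝ) B) :=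
      isCompact_univ_pi fun _ => isCompact_univ_pi fun _ => isCompact_Icc
    obtain ⟨π, hπS, φ, hφ, hπlim⟩ := hScpt.tendsto_subseq
      (x := Pn) (fun n => by
        rw [Set.mem_pi]; intro a _; rw [Set.mem_pi]; intro b _; exact hentry n a b)
    have hsub : Tendsto (xseq ∘ φ) atTop (𝓝 p) := hxlim.comp hφ.tendsto_atTop
    refine ⟨π, ?_, ?_, ?_, ?_⟩
    · intro x y
      have := hπS
      rw [Set.mem_pi] at this
      have := this x (Set.mem_univ x)
      rw [Set.mem_pi] at this
      exact (this y (Set.mem_univ y)).1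
    · intro x
      have cmap : Continuous (fun σ : V → V → ℝ => ∑ y, σ x y) :=
        continuous_finset_sum Finset.univ fun y _ =>
          (continuous_apply y).comp (continuous_apply x)
      have c1 : Tendsto (fun k => ∑ y, (Pn ∘ φ) k x y) atTop (𝓝 (∑ y, π x y)) :=
        (cmap.tendsto π).comp hπlim
      have c2 : Tendsto (fun k => ((xseq ∘ φ) k).1 x) atTop (𝓝 (p.1 x)) :=
        (((continuous_apply x).comp continuous_fst).tendsto p).comp hsub
      have : (fun k => ∑ y, (Pn ∘ φ) k x y) = fun k => ((xseq ∘ φ) k).1 x := by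
        funext k; exact hPnr (φ k) x
      rw [this] at c1
      exact tendsto_nhds_unique c1 c2
    · intro y
      have cmap : Continuous (fun σ : V → V → ℝ => ∑ x, σ x y) :=
        continuous_finset_sum Finset.univ fun x _ =>
          (continuous_apply y).comp (continuous_apply x)
      have c1 : Tendsto (fun k => ∑ x, (Pn ∘ φ) k x y) atTop (𝓝 (∑ x, π x y)) :=
        (cmap.tendsto π).comp hπlim
      have c2 : Tendsto (fun k => ((xseq ∘ φ) k).2.1 y) atTop (𝓝 (p.2.1 y)) :=
        (((continuous_apply y).comp (continuous_fst.comp continuous_snd)).tendsto p).comp hsub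
      have : (fun k => ∑ x, (Pn ∘ φ) k x y) = fun k => ((xseq ∘ φ) k).2.1 y := by
        funext k; exact hPnc (φ k) y
      rw [this] at c1
      exact tendsto_nhds_unique c1 c2
    · have cmap : Continuous (fun σ : V → V → ℝ => ∑ x, ∑ y, d x y * σ x y) :=
        continuous_finset_sum Finset.univ fun x _ =>
          continuous_finset_sum Finset.univ fun y _ =>
            continuous_const.mul ((continuous_apply y).comp (continuous_apply x))
      have c1 : Tendsto (fun k => ∑ x, ∑ y, d x y * (Pn ∘ φ) k x y) atTop
          (𝓝 (∑ x, ∑ y, d x y * π x y)) :=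
        (cmap.tendsto π).comp hπlim
      have c2 : Tendsto (fun k => ((xseq ∘ φ) k).2.2) atTop (𝓝 p.2.2) :=
        ((continuous_snd.comp continuous_snd).tendsto p).comp hsub
      exact le_of_tendsto_of_tendsto' c1 c2 fun k => hPncost (φ k)
  -- the target point is not in K
  have hbK : ((ν₀, ν₁, t) : (V → ℝ) × (V → ℝ) × ℝ) ∉ K := by
    rintro ⟨π, hπ0, hπr, hπc, hπcost⟩
    have hmem : (∑ x, ∑ y, d x y * π x y)
        ∈ {r : ℝ | ∃ π, IsCoupling π ν₀ ν₁ ∧ r = ∑ x, ∑ y, d x y * π x y} :=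
      ⟨π, ⟨hπ0, hπr, hπc⟩, rfl⟩
    have hbdd : BddBelow {r : ℝ | ∃ π, IsCoupling π ν₀ ν₁ ∧ r = ∑ x, ∑ y, d x y * π x y} := by
      refine ⟨0, ?_⟩
      rintro r ⟨σ, ⟨hσ0, _, _⟩, rfl⟩
      exact Finset.sum_nonneg fun x _ => Finset.sum_nonneg fun y _ =>
        mul_nonneg (hdnn x y) (hσ0 x y)
    have := csInf_le hbdd hmem
    have : wass d ν₀ ν₁ ≤ t := le_trans this hπcost
    linarith
  obtain ⟨ℓ, u, hu, hub⟩ := geometric_hahn_banach_closed_point hKconv hKclosed hbK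
  have h0K : (0 : (V → ℝ) × (V → ℝ) × ℝ) ∈ K := by
    refine ⟨fun _ _ => 0, fun _ _ => le_refl _, ?_, ?_, ?_⟩ <;> simp
  have hupos : 0 < u := by
    have := hu 0 h0K
    rwa [map_zero] at this
  have hKle : ∀ p ∈ K, ℓ p ≤ 0 := by
    intro p hp
    by_contra hpos
    push_neg at hpos
    have ha : (0:ℝ) ≤ u / ℓ p := le_of_lt (div_pos hupos hpos)
    have := hu _ (hKsmul _ ha p hp)
    rw [map_smul, smul_eq_mul, div_mul_cancel₀ _ (ne_of_gt hpos)] at this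
    exact lt_irrefl u this
  -- decomposition of ℓ
  set G : V → ℝ := fun x => ℓ ((Pi.single x 1 : V → ℝ), 0, 0) with hGdef
  set F : V → ℝ := fun y => ℓ ((0 : V → ℝ), (Pi.single y 1 : V → ℝ), 0) with hFdef
  set γ : ℝ := ℓ ((0 : V → ℝ), (0 : V → ℝ), 1) with hγdef
  have hdec : ∀ p : (V → ℝ) × (V → ℝ) × ℝ,
      ℓ p = (∑ x, p.1 x * G x) + (∑ y, p.2.1 y * F y) + p.2.2 * γ := by
    intro p
    have hsplit : p = ((p.1, 0, 0) : (V → ℝ) × (V → ℝ) × ℝ) + (0, p.2.1, 0) + (0, 0, p.2.2) := by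
      refine Prod.ext ?_ (Prod.ext ?_ ?_) <;> simp
    have e1 : ((p.1, 0, 0) : (V → ℝ) × (V → ℝ) × ℝ)
        = ∑ x, p.1 x • (((Pi.single x 1 : V → ℝ), 0, 0) : (V → ℝ) × (V → ℝ) × ℝ) := by
      refine Prod.ext ?_ (Prod.ext ?_ ?_) <;>
        simp [Prod.fst_sum, Prod.snd_sum, ← Pi.single_smul, smul_eq_mul,
          Finset.univ_sum_single]
    have e2 : ((0, p.2.1, 0) : (V → ℝ) × (V → ℝ) × ℝ)
        = ∑ y, p.2.1 y • (((0 : V → ℝ), (Pi.single y 1 : V → ℝ), 0) : (V → ℝ) × (V → ℝ) × ℝ) := by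
      refine Prod.ext ?_ (Prod.ext ?_ ?_) <;>
        simp [Prod.fst_sum, Prod.snd_sum, ← Pi.single_smul, smul_eq_mul,
          Finset.univ_sum_single]
    have e3 : ((0, 0, p.2.2) : (V → ℝ) × (V → ℝ) × ℝ)
        = p.2.2 • (((0 : V → ℝ), (0 : V → ℝ), (1:ℝ)) : (V → ℝ) × (V → ℝ) × ℝ) := by
      refine Prod.ext ?_ (Prod.ext ?_ ?_) <;> simp
    calc ℓ p = ℓ ((p.1, 0, 0) + (0, p.2.1, 0) + (0, 0, p.2.2)) := by rw [← hsplit]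
      _ = ℓ (p.1, 0, 0) + ℓ (0, p.2.1, 0) + ℓ (0, 0, p.2.2) := by rw [map_add, map_add]
      _ = (∑ x, p.1 x * G x) + (∑ y, p.2.1 y * F y) + p.2.2 * γ := by
          rw [e1, e2, e3, map_sum, map_sum]
          simp only [map_smul, smul_eq_mul, hGdef, hFdef, hγdef]
  -- generators are in K
  have hvK : ∀ x y, (((Pi.single x 1 : V → ℝ), (Pi.single y 1 : V → ℝ), d x y)
      : (V → ℝ) × (V → ℝ) × ℝ) ∈ K := by
    intro x y
    refine ⟨fun a b => (Pi.single x 1 : V → ℝ) a * (Pi.single y 1 : V → ℝ) b, ?_, ?_, ?_, ?_⟩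
    · intro a b
      simp only [Pi.single_apply]
      split_ifs <;> norm_num
    · intro a
      simp [← Finset.mul_sum, Pi.single_apply, Finset.sum_ite_eq']
    · intro b
      simp [← Finset.sum_mul, Pi.single_apply, Finset.sum_ite_eq']
    · simp [Pi.single_apply, mul_ite, ite_mul, Finset.sum_ite_eq']
  have heK : (((0 : V → ℝ), (0 : V → ℝ), (1:ℝ)) : (V → ℝ) × (V → ℝ) × ℝ) ∈ K := by
    refine ⟨fun _ _ => 0, fun _ _ => le_refl _, ?_, ?_, ?_⟩ <;> simp
  have hγ : γ ≤ 0 := hKle _ heK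
  have hcon : ∀ x y, G x + F y + d x y * γ ≤ 0 := by
    intro x y
    have := hKle _ (hvK x y)
    rw [hdec] at this
    simpa [Pi.single_apply, Finset.sum_ite_eq'] using this
  have hbpos : 0 < (∑ x, ν₀ x * G x) + (∑ y, ν₁ y * F y) + t * γ := by
    have := lt_trans hupos hub
    rwa [hdec] at this
  rcases eq_or_lt_of_le hγ with hγ0 | hγneg
  · -- γ = 0 : contradiction via product coupling
    exfalso
    have hpK : ((ν₀, ν₁, ∑ x, ∑ y, d x y * (ν₀ x * ν₁ y)) : (V → ℝ) × (V → ℝ) × ℝ) ∈ K := by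
      obtain ⟨hc0, hcr, hcc⟩ := prod_coupling ν₀ ν₁ hm0 hm1 h0 h1
      exact ⟨fun a b => ν₀ a * ν₁ b, hc0, hcr, hcc, le_refl _⟩
    have := hKle _ hpK
    rw [hdec] at this
    rw [hγ0] at hbpos this
    simp only [mul_zero, add_zero] at hbpos this
    linarith
  · -- γ < 0
    set β : ℝ := -γ with hβdef
    have hβ : 0 < β := by simp [hβdef]; linarith
    set g' : V → ℝ := fun x => G x / β with hg'def
    set f' : V → ℝ := fun y => F y / β with hf'def
    have hcon' : ∀ x y, f' y ≤ d x y - g' x := by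
      intro x y
      have := hcon x y
      rw [show γ = -β by simp [hβdef]] at this
      have h2 : G x / β + F y / β - d x y ≤ 0 := by
        rw [← add_div, div_sub' (ne_of_gt hβ)]
        apply div_nonpos_of_nonpos_of_nonneg _ hβ.le
        linarith
      simp only [hg'def, hf'def]
      linarith
    set h : V → ℝ := fun y => Finset.univ.inf' Finset.univ_nonempty (fun x => d x y - g' x)
      with hhdef
    have hle : ∀ x y, h y ≤ d x y - g' x := fun x y =>
      Finset.inf'_le _ (Finset.mem_univ x)
    have hf'h : ∀ y, f' y ≤ h y := fun y =>
      Finset.le_inf' _ _ fun x _ => hcon' x y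
    have hhg' : ∀ x, h x ≤ -g' x := by
      intro x
      have := hle x x
      rw [hdzero x] at this
      linarith
    have hLip : ∀ x y, h y - h x ≤ d x y := by
      intro x y
      obtain ⟨z, _, hz⟩ := Finset.exists_mem_eq_inf' Finset.univ_nonempty
        (fun a => d a x - g' a)
      have h1 : h y ≤ d z y - g' z := hle z y
      have h2 : d z y ≤ d z x + d x y := htri z x y
      have h3 : h x = d z x - g' z := hz
      linarith
    refine ⟨h, hLip, ?_⟩
    have key : t < (∑ y, f' y * ν₁ y) + (∑ x, g' x * ν₀ x) := by
      have h2 : t * β < (∑ x, ν₀ x * G x) + (∑ y, ν₁ y * F y) := by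
        rw [show γ = -β by simp [hβdef]] at hbpos
        linarith
      have h3 : (∑ y, f' y * ν₁ y) + (∑ x, g' x * ν₀ x)
          = ((∑ x, ν₀ x * G x) + (∑ y, ν₁ y * F y)) / β := by
        rw [add_div, Finset.sum_div, Finset.sum_div]
        rw [add_comm]
        congr 1 <;> exact Finset.sum_congr rfl fun z _ => by
          simp [hg'def, hf'def]; ring
      rw [h3, lt_div_iff₀ hβ]
      linarith [h2]
    have hA : ∑ y, f' y * ν₁ y ≤ ∑ y, h y * ν₁ y :=
      Finset.sum_le_sum fun y _ => mul_le_mul_of_nonneg_right (hf'h y) (h1 y)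
    have hB2 : ∑ x, h x * ν₀ x ≤ ∑ x, -g' x * ν₀ x :=
      Finset.sum_le_sum fun x _ => mul_le_mul_of_nonneg_right (hhg' x) (h0 x)
    have hB3 : ∑ x, -g' x * ν₀ x = -(∑ x, g' x * ν₀ x) := by
      rw [← Finset.sum_neg_distrib]
      exact Finset.sum_congr rfl fun x _ => by ring
    linarith

end KR
/-- Bobkov–Götze type criterion: the transportation-entropy inequality is equivalent to a
Gaussian bound on the Laplace functional. -/
theorem bobkov_goetze {V : Type*} [Fintype V] [Nonempty V]
    (d : V → V → ℝ) (m : V → ℝ) (c : ℝ)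
    (hdnn : ∀ x y, 0 ≤ d x y) (hdzero : ∀ x, d x x = 0)
    (hdpos : ∀ x y, x ≠ y → 0 < d x y)
    (htri : ∀ x y z, d x z ≤ d x y + d y z)
    (hmpos : ∀ x, 0 < m x) (hprob : ∑ x, m x = 1) (hc : 0 < c) :
    (∀ ρ : V → ℝ, (∀ x, 0 ≤ ρ x) → ∑ x, ρ x * m x = 1 →
        wass d m (fun x => ρ x * m x) ^ 2 ≤ (2 / c) * ∑ x, ρ x * Real.log (ρ x) * m x)
      ↔ (∀ f : V → ℝ, (∀ x y, f y - f x ≤ d x y) → (∑ x, f x * m x = 0) →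
          ∀ l : ℝ, 0 ≤ l → ∑ x, Real.exp (l * f x) * m x ≤ Real.exp (l ^ 2 / (2 * c))) := by
  classical
  constructor
  · -- transport inequality implies Laplace bound
    intro H f hLip hmean l hl
    set Z := ∑ x, Real.exp (l * f x) * m x with hZdef
    have hZpos : 0 < Z :=
      Finset.sum_pos (fun x _ => mul_pos (Real.exp_pos _) (hmpos x)) Finset.univ_nonempty
    set ρ : V → ℝ := fun x => Real.exp (l * f x) / Z with hρdef
    have hρ0 : ∀ x, 0 ≤ ρ x := fun x => le_of_lt (div_pos (Real.exp_pos _) hZpos)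
    have hρm : ∑ x, ρ x * m x = 1 := by
      rw [hρdef]
      simp only [div_mul_eq_mul_div]
      rw [← Finset.sum_div, ← hZdef, div_self (ne_of_gt hZpos)]
    have hW := H ρ hρ0 hρm
    have hlog : ∀ x, Real.log (ρ x) = l * f x - Real.log Z := by
      intro x
      rw [hρdef]
      simp only
      rw [Real.log_div (Real.exp_ne_zero _) (ne_of_gt hZpos), Real.log_exp]
    set α := ∑ x, f x * (ρ x * m x) with hαdef
    have hent : ∑ x, ρ x * Real.log (ρ x) * m x = l * α - Real.log Z := by
      have e1 : ∀ x, ρ x * Real.log (ρ x) * m x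
          = l * (f x * (ρ x * m x)) - Real.log Z * (ρ x * m x) := by
        intro x; rw [hlog x]; ring
      rw [Finset.sum_congr rfl fun x _ => e1 x, Finset.sum_sub_distrib,
        ← Finset.mul_sum, ← Finset.mul_sum, hρm, mul_one, ← hαdef]
    have hαW : α ≤ wass d m (fun x => ρ x * m x) := by
      have hne : ∃ π, IsCoupling π m (fun x => ρ x * m x) :=
        ⟨_, prod_coupling m (fun x => ρ x * m x) hprob hρm (fun x => (hmpos x).le)
          (fun x => mul_nonneg (hρ0 x) (hmpos x).le)⟩
      have hwd := weak_dual d m (fun x => ρ x * m x) f hLip hne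
      rw [hmean, sub_zero] at hwd
      exact hwd
    rw [hent] at hW
    have hgoal : Real.log Z ≤ l^2 / (2*c) := by
      rcases le_or_gt α 0 with hα | hα
      · have h2c : 0 < 2/c := by positivity
        have h1 : 0 ≤ (2/c) * (l*α - Real.log Z) := le_trans (sq_nonneg _) hW
        have h2 : 0 ≤ l*α - Real.log Z := (mul_nonneg_iff_of_pos_left h2c).mp h1
        have h3 : l * α ≤ 0 := mul_nonpos_of_nonneg_of_nonpos hl hα
        have h4 : 0 ≤ l^2/(2*c) := by positivity
        linarith
      · set W := wass d m (fun x => ρ x * m x) with hWdef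
        have hαsq : α^2 ≤ W^2 := pow_le_pow_left₀ hα.le hαW 2
        have hW' : c * W^2 ≤ 2*(l*α - Real.log Z) := by
          have h5 := mul_le_mul_of_nonneg_left hW hc.le
          rwa [show c * (2/c * (l*α - Real.log Z)) = 2*(l*α - Real.log Z) by
            field_simp] at h5
        rw [le_div_iff₀ (by positivity : (0:ℝ) < 2*c)]
        nlinarith [mul_le_mul_of_nonneg_left hW' hc.le,
          mul_le_mul_of_nonneg_left hαsq (by positivity : (0:ℝ) ≤ c^2),
          sq_nonneg (l - c*α)]
    exact (Real.log_le_iff_le_exp hZpos).mp hgoal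
  · -- Laplace bound implies transport inequality
    intro H ρ hρ0 hρm
    set Ent := ∑ x, ρ x * Real.log (ρ x) * m x with hEntdef
    have hent0 : 0 ≤ Ent := ent_nonneg m ρ hmpos hprob hρ0 hρm
    set t := Real.sqrt ((2/c) * Ent) with htdef
    have ht2 : t^2 = (2/c) * Ent :=
      Real.sq_sqrt (mul_nonneg (by positivity) hent0)
    have ht0 : 0 ≤ t := Real.sqrt_nonneg _
    have hWt : wass d m (fun x => ρ x * m x) ≤ t := by
      by_contra hWt
      push_neg at hWt
      obtain ⟨h, hLip, hgt⟩ := kr_dual d hdnn hdzero htri m (fun x => ρ x * m x)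
        (fun x => (hmpos x).le) (fun x => mul_nonneg (hρ0 x) (hmpos x).le) hprob hρm hWt
      set f : V → ℝ := fun x => h x - ∑ z, h z * m z with hfdef
      have hfLip : ∀ x y, f y - f x ≤ d x y := by
        intro x y
        have := hLip x y
        simp only [hfdef]
        linarith
      have hfmean : ∑ x, f x * m x = 0 := by
        simp only [hfdef, sub_mul]
        rw [Finset.sum_sub_distrib, ← Finset.mul_sum, hprob, mul_one, sub_self]
      set α := ∑ x, f x * (ρ x * m x) with hαdef
      have hαt : t < α := by
        have e1 : α = (∑ y, h y * (ρ y * m y)) - (∑ x, h x * m x) := by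
          rw [hαdef]
          simp only [hfdef, sub_mul]
          rw [Finset.sum_sub_distrib, ← Finset.mul_sum, hρm, mul_one]
        rw [e1]
        exact hgt
      have hα0 : 0 < α := lt_of_le_of_lt ht0 hαt
      have hlap := H f hfLip hfmean (c*α) (mul_pos hc hα0).le
      have hSpos : 0 < ∑ x, Real.exp ((c*α) * f x) * m x :=
        Finset.sum_pos (fun x _ => mul_pos (Real.exp_pos _) (hmpos x)) Finset.univ_nonempty
      have hlog : Real.log (∑ x, Real.exp ((c*α) * f x) * m x) ≤ (c*α)^2/(2*c) := by
        calc Real.log (∑ x, Real.exp ((c*α) * f x) * m x)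
            ≤ Real.log (Real.exp ((c*α)^2/(2*c))) := Real.log_le_log hSpos hlap
          _ = (c*α)^2/(2*c) := Real.log_exp _
      have hgibbs := gibbs m ρ (fun x => (c*α) * f x) hmpos hprob hρ0 hρm
      have hsum : ∑ x, ((c*α) * f x) * (ρ x * m x) = (c*α) * α := by
        have e2 : ∀ x : V, ((c*α) * f x) * (ρ x * m x) = (c*α) * (f x * (ρ x * m x)) :=
          fun x => by ring
        rw [Finset.sum_congr rfl fun x _ => e2 x, ← Finset.mul_sum, ← hαdef]
      have hsq : (c*α)^2/(2*c) = c*α^2/2 := by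
        field_simp
      have key : c*α*α ≤ Ent + c*α^2/2 := by
        have h1 := le_trans hgibbs (add_le_add_right hlog _)
        rw [hsum, hsq] at h1
        rw [← hEntdef] at h1
        linarith
      have hαsq : α^2 ≤ t^2 := by
        rw [ht2]
        have h2 : c*α^2/2 ≤ Ent := by nlinarith [key]
        have h3 := mul_le_mul_of_nonneg_left h2 (by positivity : (0:ℝ) ≤ 2/c)
        rwa [show (2/c) * (c*α^2/2) = α^2 by field_simp] at h3
      nlinarith [hαt, ht0, hαsq]
    have hW0 : 0 ≤ wass d m (fun x => ρ x * m x) := by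
      apply Real.sInf_nonneg
      rintro r ⟨π, ⟨hπ0, _, _⟩, rfl⟩
      exact Finset.sum_nonneg fun x _ => Finset.sum_nonneg fun y _ =>
        mul_nonneg (hdnn x y) (hπ0 x y)
    calc wass d m (fun x => ρ x * m x) ^ 2 ≤ t^2 := pow_le_pow_left₀ hW0 hWt 2
      _ = (2/c) * Ent := ht2
end
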